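/- Fix ν ∈ ℕ₀ and m ∈ ℕ₀. Define h_{ν}(t) = 2^{ν+1/2} (ν!/√((2ν)!)) (t^ν/ν!) e^{−t} 1_{[0,∞)}(t) and φ_m(t) = √2 L_m(2t) e^{−t} 1_{[0,∞)}(t). Then for every t ∈ ℝ, ∫_ℝ h_{ν}(t−τ) φ_m(τ) dτ = (ν!/√((2ν)!)) · (m!/(m+ν+1)!) · (2t)^{ν+1} L_m^{(ν+1)}(2t) e^{−t} 1_{[0,∞)}(t). -/

import Mathlib

open Real Finset MeasureTheory

/-- The `m`-th Laguerre polynomial `L_m(x) = ∑_{k=0}^m C(m,k)(−1)^k x^k/k!`. -/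
noncomputable def lagPoly (m : ℕ) (x : ℝ) : ℝ :=
  ∑ k ∈ Finset.range (m + 1), (Nat.choose m k : ℝ) * (-1) ^ k / (Nat.factorial k : ℝ) * x ^ k

/-- The associated Laguerre polynomial `L_m^{(η)}(x) = ∑_{k=0}^m C(m+η, m−k)(−1)^k x^k/k!`. -/
noncomputable def assocLagPoly (m η : ℕ) (x : ℝ) : ℝ :=
  ∑ k ∈ Finset.range (m + 1),
    (Nat.choose (m + η) (m - k) : ℝ) * (-1) ^ k / (Nat.factorial k : ℝ) * x ^ k

/-- The square-root filter `h_ν(t) = 2^{ν+1/2}(ν!/√((2ν)!))(t^ν/ν!)e^{−t}1_{[0,∞)}(t)`. -/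
noncomputable def hMatern (ν : ℕ) (t : ℝ) : ℝ :=
  Set.indicator (Set.Ici (0 : ℝ))
    (fun s =>
      (2 : ℝ) ^ ((ν : ℝ) + 1 / 2) * ((Nat.factorial ν : ℝ) / Real.sqrt (Nat.factorial (2 * ν))) *
        (s ^ ν / (Nat.factorial ν : ℝ)) * Real.exp (-s)) t

/-- The Laguerre function `φ_m(t) = √2 L_m(2t) e^{−t} 1_{[0,∞)}(t)` for `m ∈ ℕ₀`. -/
noncomputable def lagFunPos (m : ℕ) (t : ℝ) : ℝ :=
  Set.indicator (Set.Ici (0 : ℝ))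
    (fun s => Real.sqrt 2 * lagPoly m (2 * s) * Real.exp (-s)) t

lemma beta_nat : ∀ (k ν : ℕ) (t : ℝ),
    ∫ τ in (0:ℝ)..t, (t - τ) ^ ν * τ ^ k
      = (Nat.factorial ν * Nat.factorial k : ℝ) / Nat.factorial (ν + k + 1) * t ^ (ν + k + 1) := by
  intro k
  induction k with
  | zero =>
    intro ν t
    simp only [pow_zero, mul_one]
    rw [show (fun τ : ℝ => (t - τ) ^ ν) = (fun τ : ℝ => (fun u : ℝ => u ^ ν) (t - τ)) from rfl,
      intervalIntegral.integral_comp_sub_left (fun u : ℝ => u ^ ν) t]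
    simp [integral_pow, Nat.factorial_succ]
    field_simp
  | succ k ih =>
    intro ν t
    have hu : ∀ x ∈ Set.uIcc (0:ℝ) t, HasDerivAt (fun τ : ℝ => τ ^ (k+1))
        (((k:ℝ)+1) * x ^ k) x := by
      intro x _
      have := hasDerivAt_pow (k+1) x
      simpa using this
    have hv : ∀ x ∈ Set.uIcc (0:ℝ) t, HasDerivAt (fun τ : ℝ => -((t - τ) ^ (ν+1)) / ((ν:ℝ)+1))
        ((t - x) ^ ν) x := by
      intro x _
      have h1 : HasDerivAt (fun τ : ℝ => t - τ) (-1) x := by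
        simpa using (hasDerivAt_id x).const_sub t
      have h2 := (h1.pow (ν+1)).neg.div_const ((ν:ℝ)+1)
      convert h2 using 1
      have : ((ν:ℝ)+1) ≠ 0 := by positivity
      · rfl
      · rfl
      · rfl
      simp only [Nat.add_sub_cancel]
      push_cast
      field_simp
    have hIBP := intervalIntegral.integral_mul_deriv_eq_deriv_mul hu hv
      (by apply Continuous.intervalIntegrable; fun_prop)
      (by apply Continuous.intervalIntegrable; fun_prop)
    have hswap : ∫ τ in (0:ℝ)..t, (t - τ) ^ ν * τ ^ (k+1)
        = ∫ τ in (0:ℝ)..t, τ ^ (k+1) * (t - τ) ^ ν := by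
      congr 1; ext τ; ring
    rw [hswap, hIBP]
    have hrest : ∫ x in (0:ℝ)..t, ((k:ℝ)+1) * x ^ k * (-((t - x) ^ (ν+1)) / ((ν:ℝ)+1))
        = -(((k:ℝ)+1) / ((ν:ℝ)+1)) * ∫ x in (0:ℝ)..t, (t - x) ^ (ν+1) * x ^ k := by
      rw [← intervalIntegral.integral_const_mul]
      congr 1; ext x; ring
    rw [hrest, ih (ν+1) t]
    have h1 : ((Nat.factorial (ν+1) : ℝ)) = ((ν:ℝ)+1) * Nat.factorial ν := by
      push_cast [Nat.factorial_succ]; ring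
    have h2 : ((Nat.factorial (k+1) : ℝ)) = ((k:ℝ)+1) * Nat.factorial k := by
      push_cast [Nat.factorial_succ]; ring
    have h3 : ν + 1 + k + 1 = ν + (k+1) + 1 := by ring
    rw [h3]
    have hν : ((ν:ℝ)+1) ≠ 0 := by positivity
    have hf : ((Nat.factorial (ν + (k+1) + 1) : ℝ)) ≠ 0 := by positivity
    simp only [sub_self, zero_pow, h1, h2]
    field_simp
    ring

lemma nat_id (m ν k : ℕ) (hk : k ≤ m) :
    Nat.choose m k * Nat.factorial (m+ν+1) * Nat.factorial k
      = Nat.factorial m * Nat.choose (m+ν+1) (m-k) * Nat.factorial (ν+k+1) := by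
  apply Nat.eq_of_mul_eq_mul_right (Nat.factorial_pos (m-k))
  have e1 := Nat.choose_mul_factorial_mul_factorial hk
  have hle : m - k ≤ m + ν + 1 := by omega
  have e2 := Nat.choose_mul_factorial_mul_factorial hle
  have h3 : m + ν + 1 - (m - k) = ν + k + 1 := by omega
  rw [h3] at e2
  calc Nat.choose m k * Nat.factorial (m+ν+1) * Nat.factorial k * Nat.factorial (m-k)
      = (Nat.choose m k * Nat.factorial k * Nat.factorial (m-k)) * Nat.factorial (m+ν+1) := by ring
    _ = Nat.factorial m * Nat.factorial (m+ν+1) := by rw [e1]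
    _ = Nat.factorial m * (Nat.choose (m+ν+1) (m-k) * Nat.factorial (m-k) * Nat.factorial (ν+k+1)) := by rw [e2]
    _ = Nat.factorial m * Nat.choose (m+ν+1) (m-k) * Nat.factorial (ν+k+1) * Nat.factorial (m-k) := by ring

lemma nat_id_real (m ν k : ℕ) (hk : k ≤ m) :
    (Nat.choose m k : ℝ) * Nat.factorial (m+ν+1) * Nat.factorial k
      = Nat.factorial m * Nat.choose (m+ν+1) (m-k) * Nat.factorial (ν+k+1) := by
  exact_mod_cast congrArg (Nat.cast : ℕ → ℝ) (nat_id m ν k hk)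

/-- Convolution identity: `(h_ν ∗ φ_m)(t)` equals the Matérn–Laguerre function `ψ⁺_{m,ν}(t)`. -/
theorem hMatern_conv_lagFunPos (ν m : ℕ) (t : ℝ) :
    ∫ τ : ℝ, hMatern ν (t - τ) * lagFunPos m τ =
      Set.indicator (Set.Ici (0 : ℝ))
        (fun s =>
          ((Nat.factorial ν : ℝ) / Real.sqrt (Nat.factorial (2 * ν))) *
            ((Nat.factorial m : ℝ) / (Nat.factorial (m + ν + 1) : ℝ)) *
            (2 * s) ^ (ν + 1) * assocLagPoly m (ν + 1) (2 * s) * Real.exp (-s)) t := by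
  by_cases ht : (0:ℝ) ≤ t
  · -- main case
    set A : ℝ := (Nat.factorial ν : ℝ) / Real.sqrt (Nat.factorial (2 * ν)) with hA
    have key : ∀ τ : ℝ, hMatern ν (t - τ) * lagFunPos m τ =
        Set.indicator (Set.Icc (0:ℝ) t)
          (fun τ => (2:ℝ)^((ν:ℝ)+1/2) * A * ((t-τ)^ν/(Nat.factorial ν : ℝ)) *
            Real.exp (-(t-τ)) * (Real.sqrt 2 * lagPoly m (2*τ) * Real.exp (-τ))) τ := by
      intro τ
      unfold hMatern lagFunPos
      by_cases h1 : (0:ℝ) ≤ τ <;> by_cases h2 : τ ≤ t <;>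
        simp [Set.indicator_apply, Set.mem_Ici, Set.mem_Icc, h1, h2, sub_nonneg, ← hA]
    simp only [key]
    rw [MeasureTheory.integral_indicator measurableSet_Icc,
      MeasureTheory.integral_Icc_eq_integral_Ioc,
      ← intervalIntegral.integral_of_le ht]
    have hexp : ∀ τ : ℝ, Real.exp (-(t-τ)) * Real.exp (-τ) = Real.exp (-t) := by
      intro τ; rw [← Real.exp_add]; ring_nf
    have integrand_eq : ∀ τ : ℝ,
        (2:ℝ)^((ν:ℝ)+1/2) * A * ((t-τ)^ν/(Nat.factorial ν : ℝ)) *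
            Real.exp (-(t-τ)) * (Real.sqrt 2 * lagPoly m (2*τ) * Real.exp (-τ))
          = ∑ k ∈ Finset.range (m+1),
              ((2:ℝ)^((ν:ℝ)+1/2) * Real.sqrt 2 * A / (Nat.factorial ν : ℝ) * Real.exp (-t)
                * ((Nat.choose m k : ℝ) * (-1)^k / (Nat.factorial k : ℝ)) * 2^k)
              * ((t-τ)^ν * τ^k) := by
      intro τ
      have h1 : (2:ℝ)^((ν:ℝ)+1/2) * A * ((t-τ)^ν/(Nat.factorial ν : ℝ)) *
            Real.exp (-(t-τ)) * (Real.sqrt 2 * lagPoly m (2*τ) * Real.exp (-τ))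
          = ((2:ℝ)^((ν:ℝ)+1/2) * Real.sqrt 2 * A / (Nat.factorial ν : ℝ)) *
            ((t-τ)^ν * lagPoly m (2*τ)) * (Real.exp (-(t-τ)) * Real.exp (-τ)) := by
        ring
      rw [h1, hexp τ]
      unfold lagPoly
      simp only [Finset.mul_sum, Finset.sum_mul]
      apply Finset.sum_congr rfl
      intro k _
      rw [mul_pow]
      ring
    simp only [integrand_eq]
    rw [intervalIntegral.integral_finset_sum
      (fun k _ => (by fun_prop : Continuous (fun τ : ℝ =>
        ((2:ℝ)^((ν:ℝ)+1/2) * Real.sqrt 2 * A / (Nat.factorial ν : ℝ) * Real.exp (-t)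
          * ((Nat.choose m k : ℝ) * (-1)^k / (Nat.factorial k : ℝ)) * 2^k)
        * ((t-τ)^ν * τ^k))).intervalIntegrable 0 t)]
    rw [Set.indicator_of_mem (Set.mem_Ici.2 ht)]
    unfold assocLagPoly
    rw [Finset.mul_sum]
    simp only [Finset.sum_mul, Finset.mul_sum]
    apply Finset.sum_congr rfl
    intro k hk
    have hkm : k ≤ m := Nat.lt_succ_iff.mp (Finset.mem_range.mp hk)
    rw [intervalIntegral.integral_const_mul, beta_nat k ν t]
    have h2pow : (2:ℝ)^((ν:ℝ)+1/2) * Real.sqrt 2 = 2^(ν+1) := by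
      rw [Real.sqrt_eq_rpow, ← Real.rpow_natCast 2 (ν+1), ← Real.rpow_add (by norm_num : (0:ℝ) < 2)]
      congr 1
      push_cast
      ring
    have hid := nat_id_real m ν k hkm
    have hmν : m + (ν+1) = m + ν + 1 := by ring
    rw [hmν]
    have hνf : ((Nat.factorial ν : ℝ)) ≠ 0 := by positivity
    have hkf : ((Nat.factorial k : ℝ)) ≠ 0 := by positivity
    have hνkf : ((Nat.factorial (ν+k+1) : ℝ)) ≠ 0 := by positivity
    have hmνf : ((Nat.factorial (m+ν+1) : ℝ)) ≠ 0 := by positivity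
    have lhs_eq : (2:ℝ)^((ν:ℝ)+1/2) * Real.sqrt 2 * A / (Nat.factorial ν : ℝ) * Real.exp (-t)
          * ((Nat.choose m k : ℝ) * (-1)^k / (Nat.factorial k : ℝ)) * 2^k
          * ((Nat.factorial ν * Nat.factorial k : ℝ) / Nat.factorial (ν + k + 1) * t ^ (ν + k + 1))
        = (2:ℝ)^(ν+1) * A * Real.exp (-t) * (-1)^k * 2^k * t^(ν+k+1)
            * ((Nat.choose m k : ℝ) / Nat.factorial (ν+k+1)) := by
      rw [← h2pow]
      field_simp
    rw [lhs_eq]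
    have hdiv : (Nat.choose m k : ℝ) / Nat.factorial (ν+k+1)
        = (Nat.factorial m : ℝ) * Nat.choose (m+ν+1) (m-k) / (Nat.factorial (m+ν+1) * Nat.factorial k) := by
      rw [div_eq_div_iff hνkf (by positivity)]
      linear_combination hid
    rw [hdiv]
    field_simp
    ring
  · -- t < 0 : both sides vanish
    have hz : ∀ τ : ℝ, hMatern ν (t - τ) * lagFunPos m τ = 0 := by
      intro τ
      by_cases hτ : (0:ℝ) ≤ τ
      · have : t - τ ∉ Set.Ici (0:ℝ) := by
          simp only [Set.mem_Ici, not_le]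
          push_neg at ht
          linarith
        rw [hMatern, Set.indicator_of_notMem this, zero_mul]
      · rw [lagFunPos, Set.indicator_of_notMem (by simpa using hτ), mul_zero]
    simp only [hz, integral_zero]
    rw [Set.indicator_of_notMem (by simpa using ht)]
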